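/- Let B ∈ M_n(ℝ) be skew-symmetrizable. Then for any reduced sequence w, the first duality G^w B^w = B^∅ C^w holds. -/

import Mathlib

open Matrix

noncomputable section

abbrev Mat3 := Matrix (Fin 3) (Fin 3) ℝ

def pPart {n : ℕ} (A : Matrix (Fin n) (Fin n) ℝ) : Matrix (Fin n) (Fin n) ℝ :=
  Matrix.of fun i j => max (A i j) 0

def Jmat {n : ℕ} (k : Fin n) : Matrix (Fin n) (Fin n) ℝ :=
  Matrix.diagonal fun i => if i = k then -1 else 1

/-- `A^{•k}`: keep only column `k`. -/
def colSel {n : ℕ} (k : Fin n) (A : Matrix (Fin n) (Fin n) ℝ) : Matrix (Fin n) (Fin n) ℝ :=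
  Matrix.of fun i j => if j = k then A i j else 0

/-- `A^{k•}`: keep only row `k`. -/
def rowSel {n : ℕ} (k : Fin n) (A : Matrix (Fin n) (Fin n) ℝ) : Matrix (Fin n) (Fin n) ℝ :=
  Matrix.of fun i j => if i = k then A i j else 0

/-- Matrix mutation in direction `k`. -/
def mutB {n : ℕ} (k : Fin n) (B : Matrix (Fin n) (Fin n) ℝ) : Matrix (Fin n) (Fin n) ℝ :=
  (Jmat k + colSel k (pPart (-B))) * B * (Jmat k + rowSel k (pPart B))

/-- One step of the simultaneous `(B, C, G)` recursion, mutating at direction `k`. -/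
def CGstep {n : ℕ} (B0 : Matrix (Fin n) (Fin n) ℝ)
    (p : Matrix (Fin n) (Fin n) ℝ × Matrix (Fin n) (Fin n) ℝ × Matrix (Fin n) (Fin n) ℝ)
    (k : Fin n) :
    Matrix (Fin n) (Fin n) ℝ × Matrix (Fin n) (Fin n) ℝ × Matrix (Fin n) (Fin n) ℝ :=
  (mutB k p.1,
   p.2.1 * Jmat k + p.2.1 * rowSel k (pPart p.1) + colSel k (pPart (-p.2.1)) * p.1,
   p.2.2 * Jmat k + p.2.2 * colSel k (pPart (-p.1)) - B0 * colSel k (pPart (-p.2.1)))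

def CGmat {n : ℕ} (B : Matrix (Fin n) (Fin n) ℝ) (w : List (Fin n)) :
    Matrix (Fin n) (Fin n) ℝ × Matrix (Fin n) (Fin n) ℝ × Matrix (Fin n) (Fin n) ℝ :=
  w.foldl (CGstep B) (B, 1, 1)

/-- The exchange matrix `B^w`. -/
def Bmat {n : ℕ} (B : Matrix (Fin n) (Fin n) ℝ) (w : List (Fin n)) : Matrix (Fin n) (Fin n) ℝ :=
  (CGmat B w).1

/-- The `C`-matrix `C^w`. -/
def Cmat {n : ℕ} (B : Matrix (Fin n) (Fin n) ℝ) (w : List (Fin n)) : Matrix (Fin n) (Fin n) ℝ :=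
  (CGmat B w).2.1

/-- The `G`-matrix `G^w`. -/
def Gmat {n : ℕ} (B : Matrix (Fin n) (Fin n) ℝ) (w : List (Fin n)) : Matrix (Fin n) (Fin n) ℝ :=
  (CGmat B w).2.2

/-- A sequence is reduced if consecutive entries differ. -/
def ReducedSeq {n : ℕ} (w : List (Fin n)) : Prop := w.Chain' (· ≠ ·)

def SkewSymmetrizable {n : ℕ} (B : Matrix (Fin n) (Fin n) ℝ) : Prop :=
  ∃ d : Fin n → ℝ, (∀ i, 0 < d i) ∧ (Matrix.diagonal d * B)ᵀ = -(Matrix.diagonal d * B)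

def cyclicPattern : Mat3 := !![0,-1,1; 1,0,-1; -1,1,0]

/-- A rank-3 exchange matrix is cyclic if its sign pattern is `± cyclicPattern`. -/
def IsCyclic3 (B : Mat3) : Prop :=
  (∀ i j, Real.sign (B i j) = cyclicPattern i j) ∨
  (∀ i j, Real.sign (B i j) = - cyclicPattern i j)

/-- `B` is cluster-cyclic if every iterated mutation along a reduced sequence is cyclic. -/
def ClusterCyclic (B : Mat3) : Prop :=
  ∀ w : List (Fin 3), ReducedSeq w → IsCyclic3 (Bmat B w)

/-- `ε` is a family of tropical signs for the (sign-coherent) `C`-pattern of `B`. -/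
def IsTropSigns (B : Mat3) (ε : List (Fin 3) → Fin 3 → ℝ) : Prop :=
  ∀ w : List (Fin 3), ReducedSeq w → ∀ i : Fin 3,
    (ε w i = 1 ∨ ε w i = -1) ∧ ∀ j, 0 ≤ ε w i * Cmat B w j i


namespace FirstDualityAux

variable {n : ℕ}

lemma colSel_eq (k : Fin n) (A : Matrix (Fin n) (Fin n) ℝ) :
    colSel k A = A * Matrix.single k k 1 := by
  ext i j
  simp only [colSel, Matrix.of_apply, Matrix.mul_apply, Matrix.single, ite_and,
    Finset.sum_ite_eq', Finset.mem_univ, if_true, mul_ite, mul_one, mul_zero]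
  rcases eq_or_ne j k with h | h
  · simp [h]
  · simp [h, Ne.symm h]

lemma rowSel_eq (k : Fin n) (A : Matrix (Fin n) (Fin n) ℝ) :
    rowSel k A = Matrix.single k k 1 * A := by
  ext i j
  simp only [rowSel, Matrix.of_apply, Matrix.mul_apply, Matrix.single, ite_and,
    Matrix.of_apply, ite_mul, one_mul, zero_mul, Finset.sum_ite_eq, Finset.mem_univ, if_true]
  rcases eq_or_ne i k with h | h
  · simp [h]
  · simp [h, Ne.symm h]

lemma Jmat_eq (k : Fin n) :
    Jmat k = 1 - (Matrix.single k k (1:ℝ) + Matrix.single k k 1) := by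
  ext i j
  simp only [Jmat, Matrix.diagonal, Matrix.of_apply, Matrix.sub_apply, Matrix.one_apply,
    Matrix.add_apply, Matrix.single, Matrix.of_apply, ite_and]
  rcases eq_or_ne i j with h | h <;> rcases eq_or_ne i k with h2 | h2 <;>
    simp_all [eq_comm] <;> norm_num

lemma S_mul_S (k : Fin n) :
    Matrix.single k k (1:ℝ) * Matrix.single k k 1 = Matrix.single k k 1 := by
  rw [Matrix.single_mul_single_same]; norm_num

lemma S_mul_A_mul_S (k : Fin n) (A : Matrix (Fin n) (Fin n) ℝ) :
    Matrix.single k k 1 * A * Matrix.single k k 1 = A k k • Matrix.single k k (1:ℝ) := by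
  ext i j
  simp only [Matrix.mul_apply, Matrix.single, Matrix.of_apply, ite_and, ite_mul, mul_ite,
    one_mul, mul_one, zero_mul, mul_zero, Finset.sum_ite_eq, Finset.sum_ite_eq',
    Finset.mem_univ, if_true, Matrix.smul_apply, smul_ite, smul_zero, smul_eq_mul]
  rcases eq_or_ne k i with h | h <;> rcases eq_or_ne k j with h2 | h2 <;> simp [h, h2]

variable {S Q R A C G B0 B' J E F : Matrix (Fin n) (Fin n) ℝ}

lemma core (hSS : S*S = S) (hQ : S*Q*S = 0) (hBs : S*B'*S = 0)
    (hJ : J = 1 - (S+S)) (hE : E = J + Q*S) (hF : F = J + S*R)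
    (hGB : G * B' = B0 * C) :
    (G*J + G*(Q*S) - B0*(A*S)) * (E * B' * F)
      = B0 * (C*J + C*(S*R) + (A*S)*B') := by
  have hSJ : S * J = -S := by rw [hJ, mul_sub, mul_one, mul_add, hSS]; abel
  have hJQS : J*(Q*S) = Q*S := by
    rw [hJ, sub_mul, one_mul, add_mul]
    simp only [← mul_assoc]
    rw [hQ]; abel
  have hJJ : J * J = 1 := by
    simp only [hJ, sub_mul, mul_sub, add_mul, mul_add, one_mul, mul_one, hSS]
    abel
  have hEE : E * E = 1 := by
    rw [hE, add_mul, mul_add, mul_add, hJJ, hJQS]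
    have h2 : (Q*S)*J = -(Q*S) := by rw [mul_assoc, hSJ, mul_neg]
    have h3 : (Q*S)*(Q*S) = 0 := by
      rw [mul_assoc, ← mul_assoc S Q S, hQ, mul_zero]
    rw [h2, h3]; abel
  have hSE : S * E = -S := by
    rw [hE, mul_add, hSJ, ← mul_assoc, hQ, add_zero]
  have hSBF : S * (B' * F) = S * B' := by
    rw [← mul_assoc, hF, mul_add, ← mul_assoc, hBs, zero_mul, add_zero, hJ,
      mul_sub, mul_one, mul_add, hBs]
    simp
  have hGE : G*J + G*(Q*S) = G*E := by rw [hE, mul_add]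
  rw [hGE, sub_mul]
  have t1 : G * E * (E * B' * F) = B0 * (C * F) := by
    calc G * E * (E * B' * F) = G * (E * E) * (B' * F) := by
          simp only [mul_assoc]
      _ = (G * B') * F := by rw [hEE, mul_one, ← mul_assoc]
      _ = B0 * (C * F) := by rw [hGB, mul_assoc]
  have t2 : B0 * (A*S) * (E * B' * F) = -(B0 * (A * (S * B'))) := by
    calc B0 * (A*S) * (E * B' * F) = B0 * (A * (S * E * (B' * F))) := by
          simp only [mul_assoc]
      _ = B0 * (A * (-(S * (B' * F)))) := by rw [hSE, neg_mul]
      _ = -(B0 * (A * (S * B'))) := by rw [hSBF]; simp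
  rw [t1, t2, sub_neg_eq_add, hF]
  simp only [mul_add, mul_assoc]

lemma skew_step {D : Matrix (Fin n) (Fin n) ℝ} (hD : Dᵀ = D)
    (hB : (D*B')ᵀ = -(D*B')) (hE : Eᵀ*D = D*F) (hF : Fᵀ*D = D*E) :
    (D*(E*B'*F))ᵀ = -(D*(E*B'*F)) := by
  have hBD : B'ᵀ * D = -(D*B') := by
    calc B'ᵀ * D = B'ᵀ * Dᵀ := by rw [hD]
      _ = (D*B')ᵀ := by rw [transpose_mul]
      _ = -(D*B') := hB
  calc (D*(E*B'*F))ᵀ = Fᵀ * (B'ᵀ * (Eᵀ * Dᵀ)) := by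
        simp only [transpose_mul, mul_assoc]
    _ = Fᵀ * (B'ᵀ * (D * F)) := by rw [hD, hE]
    _ = Fᵀ * ((B'ᵀ * D) * F) := by simp only [mul_assoc]
    _ = Fᵀ * (-(D*B') * F) := by rw [hBD]
    _ = -((Fᵀ * D) * (B' * F)) := by simp only [neg_mul, mul_neg, mul_assoc]
    _ = -(D*(E*B'*F)) := by rw [hF]; simp only [mul_assoc]

variable {k : Fin n} {d : Fin n → ℝ}

lemma entry_skew (hB : (Matrix.diagonal d * B')ᵀ = -(Matrix.diagonal d * B')) (i j : Fin n) :
    d j * B' j i = -(d i * B' i j) := by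
  have h := congrFun (congrFun hB i) j
  simpa [Matrix.diagonal_mul] using h

lemma diag_zero (hd : ∀ i, 0 < d i)
    (hB : (Matrix.diagonal d * B')ᵀ = -(Matrix.diagonal d * B')) (k : Fin n) : B' k k = 0 := by
  have h := entry_skew hB k k
  have h2 : d k * B' k k = 0 := by linarith
  exact (mul_eq_zero.1 h2).resolve_left (hd k).ne'

lemma Et_eq (hd : ∀ i, 0 < d i)
    (hB : (Matrix.diagonal d * B')ᵀ = -(Matrix.diagonal d * B')) :
    (Jmat k + colSel k (pPart (-B')))ᵀ * Matrix.diagonal d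
      = Matrix.diagonal d * (Jmat k + rowSel k (pPart B')) := by
  have h0 : B' k k = 0 := diag_zero hd hB k
  ext i j
  simp only [Matrix.mul_diagonal, Matrix.diagonal_mul, Matrix.transpose_apply,
    Matrix.add_apply, Jmat, Matrix.diagonal_apply, colSel, rowSel, pPart,
    Matrix.of_apply, Matrix.neg_apply]
  rcases eq_or_ne i k with hik | hik
  · subst hik
    rcases eq_or_ne j i with hji | hji
    · subst hji; simp [h0]
    · simp only [hji, Ne.symm hji, if_false, if_true, zero_add, add_zero]
      rw [max_mul_of_nonneg _ _ (hd j).le, mul_max_of_nonneg _ _ (hd i).le]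
      rw [zero_mul, mul_zero]
      congr 1
      have := entry_skew hB i j
      linarith
  · rcases eq_or_ne j i with hji | hji
    · subst hji; simp [hik]
    · simp [hji, Ne.symm hji, hik]

lemma Ft_eq (hd : ∀ i, 0 < d i)
    (hB : (Matrix.diagonal d * B')ᵀ = -(Matrix.diagonal d * B')) :
    (Jmat k + rowSel k (pPart B'))ᵀ * Matrix.diagonal d
      = Matrix.diagonal d * (Jmat k + colSel k (pPart (-B'))) := by
  have h0 : B' k k = 0 := diag_zero hd hB k
  ext i j
  simp only [Matrix.mul_diagonal, Matrix.diagonal_mul, Matrix.transpose_apply,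
    Matrix.add_apply, Jmat, Matrix.diagonal_apply, colSel, rowSel, pPart,
    Matrix.of_apply, Matrix.neg_apply]
  rcases eq_or_ne j k with hjk | hjk
  · subst hjk
    rcases eq_or_ne i j with hij | hij
    · subst hij; simp [h0]
    · simp only [hij, Ne.symm hij, if_false, if_true, zero_add, add_zero]
      rw [max_mul_of_nonneg _ _ (hd j).le, mul_max_of_nonneg _ _ (hd i).le]
      rw [zero_mul, mul_zero]
      congr 1
      have := entry_skew hB j i
      linarith
  · rcases eq_or_ne i j with hij | hij
    · subst hij; simp [hjk]
    · simp [hij, Ne.symm hij, hjk]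

end FirstDualityAux

theorem first_duality {n : ℕ} (B : Matrix (Fin n) (Fin n) ℝ)
    (hskew : SkewSymmetrizable B) (w : List (Fin n)) (hw : ReducedSeq w) :
    Gmat B w * Bmat B w = B * Cmat B w := by
  classical
  obtain ⟨d, hd, hB0⟩ := hskew
  have key : ∀ v : List (Fin n),
      (Matrix.diagonal d * (CGmat B v).1)ᵀ = -(Matrix.diagonal d * (CGmat B v).1) ∧
      (CGmat B v).2.2 * (CGmat B v).1 = B * (CGmat B v).2.1 := by
    intro v
    induction v using List.reverseRecOn with
    | nil =>
        refine ⟨?_, ?_⟩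
        · simpa [CGmat] using hB0
        · simp [CGmat]
    | append_singleton l k ih =>
        obtain ⟨ihs, ihd⟩ := ih
        have hstep : CGmat B (l ++ [k]) = CGstep B (CGmat B l) k := by
          simp [CGmat]
        set B' := (CGmat B l).1 with hB'
        set C := (CGmat B l).2.1 with hC
        set G := (CGmat B l).2.2 with hG
        have h0 : B' k k = 0 := FirstDualityAux.diag_zero hd ihs k
        have hQ0 : (pPart (-B')) k k = 0 := by simp [pPart, h0]
        have hR0 : (pPart B') k k = 0 := by simp [pPart, h0]
        have hQ : Matrix.single k k 1 * pPart (-B') * Matrix.single k k 1 = 0 := by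
          rw [FirstDualityAux.S_mul_A_mul_S, hQ0, zero_smul]
        have hBs : Matrix.single k k 1 * B' * Matrix.single k k 1 = 0 := by
          rw [FirstDualityAux.S_mul_A_mul_S, h0, zero_smul]
        constructor
        · rw [hstep]
          show (Matrix.diagonal d * mutB k B')ᵀ = -(Matrix.diagonal d * mutB k B')
          unfold mutB
          exact FirstDualityAux.skew_step (Matrix.diagonal_transpose d) ihs
            (FirstDualityAux.Et_eq hd ihs) (FirstDualityAux.Ft_eq hd ihs)
        · rw [hstep]
          show (G * Jmat k + G * colSel k (pPart (-B')) - B * colSel k (pPart (-C))) *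
              mutB k B'
            = B * (C * Jmat k + C * rowSel k (pPart B') + colSel k (pPart (-C)) * B')
          unfold mutB
          simp only [FirstDualityAux.colSel_eq, FirstDualityAux.rowSel_eq]
          exact FirstDualityAux.core (FirstDualityAux.S_mul_S k) hQ hBs
            (FirstDualityAux.Jmat_eq k) rfl rfl ihd
  exact (key w).2
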